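/- Let η be a probability measure on [0,1), let D_n denote the level-n dyadic partition, and let H(·,·) denote Shannon entropy. For every m, n ∈ ℕ: (1/n) H(η, D_n) = E_{1≤i≤n}[(1/m) H(η_{x,i}, D_{i+m})] + O(m/n), where η_{x,i} is the conditional measure of η on the dyadic cell D_i(x), the expectation is over i uniform in {1,…,n} and x ∼ η, and the implied constant is absolute. -/

import Mathlib

open MeasureTheory

/-- `ent p = -p log₂ p`, the entropy summand (base-2 logarithm). -/
noncomputable def ent (p : ℝ) : ℝ := -(p * Real.logb 2 p)

/-- The level-`i` dyadic cell `[k/2^i, (k+1)/2^i)`. -/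
noncomputable def dcell (i k : ℕ) : Set ℝ :=
  Set.Ico ((k : ℝ) / 2 ^ i) (((k : ℝ) + 1) / 2 ^ i)

/-- Shannon entropy of `μ` with respect to the level-`i` dyadic partition of `[0,1)`. -/
noncomputable def Hdy (μ : Measure ℝ) (i : ℕ) : ℝ :=
  ∑ k ∈ Finset.range (2 ^ i), ent ((μ (dcell i k)).toReal)

/-- The level-`i` dyadic cell containing `x ∈ [0,1)`. -/
noncomputable def cellOf (i : ℕ) (x : ℝ) : Set ℝ :=
  Set.Ico ((⌊x * 2 ^ i⌋ : ℝ) / 2 ^ i) (((⌊x * 2 ^ i⌋ : ℝ) + 1) / 2 ^ i)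

/-- The level-`i` component of `μ` at `x`: the conditional measure on `D_i(x)`. -/
noncomputable def comp (μ : Measure ℝ) (i : ℕ) (x : ℝ) : Measure ℝ :=
  (μ (cellOf i x))⁻¹ • μ.restrict (cellOf i x)


lemma ent_zero : ent 0 = 0 := by simp [ent]

lemma ent_nonneg {p : ℝ} (h0 : 0 ≤ p) (h1 : p ≤ 1) : 0 ≤ ent p := by
  have : Real.logb 2 p ≤ 0 := Real.logb_nonpos one_lt_two h0 h1
  have := mul_nonpos_of_nonneg_of_nonpos h0 this
  simpa [ent] using this

lemma measurableSet_dcell (i k : ℕ) : MeasurableSet (dcell i k) := measurableSet_Ico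

lemma union_Ico_div (c : ℝ) (hc : 0 < c) (a : ℝ) (N : ℕ) :
    ⋃ r ∈ Finset.range N, Set.Ico ((a + r) / c) ((a + r + 1) / c)
      = Set.Ico (a / c) ((a + N) / c) := by
  induction N with
  | zero => simp
  | succ N ih =>
      rw [Finset.range_add_one]
      rw [Finset.set_biUnion_insert, Set.union_comm, ih]
      have h1 : a / c ≤ (a + (N : ℝ)) / c :=
        (div_le_div_iff_of_pos_right hc).mpr (by linarith [Nat.cast_nonneg (α := ℝ) N])
      have h2 : (a + (N : ℝ)) / c ≤ (a + (N : ℝ) + 1) / c :=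
        (div_le_div_iff_of_pos_right hc).mpr (by linarith)
      rw [Set.Ico_union_Ico_eq_Ico h1 h2]
      push_cast
      ring_nf

lemma dcell_eq_biUnion (i m k : ℕ) :
    dcell i k = ⋃ r ∈ Finset.range (2 ^ m), dcell (i + m) (k * 2 ^ m + r) := by
  have h := union_Ico_div ((2 : ℝ) ^ (i + m)) (by positivity) ((k : ℝ) * 2 ^ m) (2 ^ m)
  have h2 : ∀ r ∈ Finset.range (2 ^ m),
      dcell (i + m) (k * 2 ^ m + r)
        = Set.Ico (((k : ℝ) * 2 ^ m + r) / 2 ^ (i + m)) (((k : ℝ) * 2 ^ m + r + 1) / 2 ^ (i + m)) := by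
    intro r _
    simp only [dcell]
    push_cast
    ring_nf
  rw [Set.iUnion₂_congr h2, h]
  simp only [dcell]
  have hpos : (0 : ℝ) < 2 ^ i := by positivity
  have : ((k : ℝ) * 2 ^ m) / 2 ^ (i + m) = (k : ℝ) / 2 ^ i := by
    rw [pow_add]; field_simp
  have h3 : ((k : ℝ) * 2 ^ m + (2 : ℝ) ^ m) / 2 ^ (i + m) = ((k : ℝ) + 1) / 2 ^ i := by
    rw [pow_add]; field_simp
  push_cast
  rw [this, h3]

lemma dcell_disjoint {j k l : ℕ} (h : k ≠ l) : Disjoint (dcell j k) (dcell j l) := by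
  rw [dcell, dcell, Set.Ico_disjoint_Ico]
  have hpos : (0 : ℝ) < 2 ^ j := by positivity
  rcases lt_or_gt_of_ne h with hkl | hkl
  · have : ((k : ℝ) + 1) / 2 ^ j ≤ (l : ℝ) / 2 ^ j := by
      gcongr; exact_mod_cast hkl
    exact le_trans (min_le_left _ _) (le_trans this (le_max_right _ _))
  · have : ((l : ℝ) + 1) / 2 ^ j ≤ (k : ℝ) / 2 ^ j := by
      gcongr; exact_mod_cast hkl
    exact le_trans (min_le_right _ _) (le_trans this (le_max_left _ _))

lemma measure_dcell_sum (μ : Measure ℝ) (i m k : ℕ) :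
    μ (dcell i k) = ∑ r ∈ Finset.range (2 ^ m), μ (dcell (i + m) (k * 2 ^ m + r)) := by
  rw [dcell_eq_biUnion i m k]
  rw [measure_biUnion_finset ?_ (fun r _ => measurableSet_dcell _ _)]
  intro r hr s hs hrs
  exact dcell_disjoint (by omega)

lemma dcell_subset (i m k r : ℕ) (hr : r < 2 ^ m) :
    dcell (i + m) (k * 2 ^ m + r) ⊆ dcell i k := by
  have hpos : (0 : ℝ) < 2 ^ (i + m) := by positivity
  have e1 : (k : ℝ) / 2 ^ i = ((k : ℝ) * 2 ^ m) / 2 ^ (i + m) := by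
    rw [pow_add]; field_simp
  have e2 : ((k : ℝ) + 1) / 2 ^ i = ((k : ℝ) * 2 ^ m + 2 ^ m) / 2 ^ (i + m) := by
    rw [pow_add]; field_simp
  rw [dcell, dcell, e1, e2]
  apply Set.Ico_subset_Ico
  · apply (div_le_div_iff_of_pos_right hpos).mpr
    push_cast
    linarith [Nat.cast_nonneg (α := ℝ) r]
  · apply (div_le_div_iff_of_pos_right hpos).mpr
    push_cast
    have : (r : ℝ) + 1 ≤ (2 : ℝ) ^ m := by exact_mod_cast hr
    linarith

lemma dcell_inter_empty (i m k l : ℕ) (h : l < k * 2 ^ m ∨ (k + 1) * 2 ^ m ≤ l) :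
    dcell (i + m) l ∩ dcell i k = ∅ := by
  have hpos : (0 : ℝ) < 2 ^ (i + m) := by positivity
  have e1 : (k : ℝ) / 2 ^ i = ((k : ℝ) * 2 ^ m) / 2 ^ (i + m) := by
    rw [pow_add]; field_simp
  have e2 : ((k : ℝ) + 1) / 2 ^ i = ((k : ℝ) * 2 ^ m + 2 ^ m) / 2 ^ (i + m) := by
    rw [pow_add]; field_simp
  rw [dcell, dcell, Set.Ico_inter_Ico, Set.Ico_eq_empty]
  rw [not_lt]
  rcases h with h | h
  · have hl1 : (l : ℝ) + 1 ≤ (k : ℝ) * 2 ^ m := by exact_mod_cast h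
    calc min (((l : ℝ) + 1) / 2 ^ (i + m)) (((k : ℝ) + 1) / 2 ^ i)
        ≤ ((l : ℝ) + 1) / 2 ^ (i + m) := min_le_left _ _
      _ ≤ (k : ℝ) / 2 ^ i := by
          rw [e1]; exact (div_le_div_iff_of_pos_right hpos).mpr hl1
      _ ≤ max ((l : ℝ) / 2 ^ (i + m)) ((k : ℝ) / 2 ^ i) := le_max_right _ _
  · have hl1 : (k : ℝ) * 2 ^ m + 2 ^ m ≤ (l : ℝ) := by
      have := (Nat.cast_le (α := ℝ)).mpr h
      push_cast at this; linarith
    calc min (((l : ℝ) + 1) / 2 ^ (i + m)) (((k : ℝ) + 1) / 2 ^ i)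
        ≤ ((k : ℝ) + 1) / 2 ^ i := min_le_right _ _
      _ ≤ (l : ℝ) / 2 ^ (i + m) := by
          rw [e2]; exact (div_le_div_iff_of_pos_right hpos).mpr hl1
      _ ≤ max ((l : ℝ) / 2 ^ (i + m)) ((k : ℝ) / 2 ^ i) := le_max_left _ _

lemma cellOf_eq {i k : ℕ} {x : ℝ} (hx : x ∈ dcell i k) : cellOf i x = dcell i k := by
  rw [dcell, Set.mem_Ico] at hx
  have hpos : (0 : ℝ) < 2 ^ i := by positivity
  have hfl : ⌊x * 2 ^ i⌋ = (k : ℤ) := by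
    rw [Int.floor_eq_iff]
    constructor
    · calc ((k : ℤ) : ℝ) = (k : ℝ) / 2 ^ i * 2 ^ i := by field_simp; norm_cast
        _ ≤ x * 2 ^ i := by gcongr; exact hx.1
    · calc x * 2 ^ i < ((k : ℝ) + 1) / 2 ^ i * 2 ^ i := by gcongr; exact hx.2
        _ = (k : ℝ) + 1 := by field_simp
        _ = ((k : ℤ) : ℝ) + 1 := by push_cast; ring
  rw [cellOf, dcell, hfl]
  push_cast
  rfl

lemma comp_apply_meas (μ : Measure ℝ) {i k : ℕ} {x : ℝ} (hx : x ∈ dcell i k)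
    {A : Set ℝ} (hA : MeasurableSet A) :
    comp μ i x A = (μ (dcell i k))⁻¹ * μ (A ∩ dcell i k) := by
  rw [comp, cellOf_eq hx, Measure.smul_apply, smul_eq_mul, Measure.restrict_apply hA]

lemma Hdy_comp_eq (μ : Measure ℝ) {i : ℕ} (m : ℕ) {k : ℕ} (hk : k < 2 ^ i)
    {x : ℝ} (hx : x ∈ dcell i k) :
    Hdy (comp μ i x) (i + m)
      = ∑ r ∈ Finset.range (2 ^ m),
          ent (((μ (dcell i k))⁻¹ * μ (dcell (i + m) (k * 2 ^ m + r))).toReal) := by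
  rw [Hdy]
  have hval : ∀ l, (comp μ i x) (dcell (i + m) l)
      = (μ (dcell i k))⁻¹ * μ (dcell (i + m) l ∩ dcell i k) :=
    fun l => comp_apply_meas μ hx (measurableSet_dcell _ _)
  have hsub : Finset.Ico (k * 2 ^ m) (k * 2 ^ m + 2 ^ m) ⊆ Finset.range (2 ^ (i + m)) := by
    intro l hl
    rw [Finset.mem_Ico] at hl
    rw [Finset.mem_range, pow_add]
    calc l < k * 2 ^ m + 2 ^ m := hl.2
      _ = (k + 1) * 2 ^ m := by ring
      _ ≤ 2 ^ i * 2 ^ m := by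
          exact Nat.mul_le_mul_right _ (by omega)
  rw [← Finset.sum_subset hsub]
  · rw [Finset.sum_Ico_eq_sum_range]
    simp only [Nat.add_sub_cancel_left]
    apply Finset.sum_congr rfl
    intro r hr
    rw [Finset.mem_range] at hr
    rw [hval, Set.inter_eq_left.mpr (dcell_subset i m k r hr)]
  · intro l _ hl
    rw [Finset.mem_Ico] at hl
    have hcase : l < k * 2 ^ m ∨ (k + 1) * 2 ^ m ≤ l := by
      rcases Nat.lt_or_ge l (k * 2 ^ m) with h | h
      · exact Or.inl h
      · right
        have : ¬ l < k * 2 ^ m + 2 ^ m := fun hcon => hl ⟨h, hcon⟩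
        have h2 : (k + 1) * 2 ^ m = k * 2 ^ m + 2 ^ m := by ring
        omega
    rw [hval, dcell_inter_empty i m k l hcase]
    simp [ent_zero]

lemma per_cell_chain (μ : Measure ℝ) [IsProbabilityMeasure μ] (i m k : ℕ) :
    (μ (dcell i k)).toReal *
        (∑ r ∈ Finset.range (2 ^ m),
          ent (((μ (dcell i k))⁻¹ * μ (dcell (i + m) (k * 2 ^ m + r))).toReal))
      = (∑ r ∈ Finset.range (2 ^ m), ent ((μ (dcell (i + m) (k * 2 ^ m + r))).toReal))
        - ent ((μ (dcell i k)).toReal) := by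
  set c := μ (dcell i k) with hc
  have hct : c ≠ ⊤ := measure_ne_top μ _
  by_cases h0 : c = 0
  · have hsub : ∀ r ∈ Finset.range (2 ^ m), μ (dcell (i + m) (k * 2 ^ m + r)) = 0 := by
      intro r hr
      rw [Finset.mem_range] at hr
      exact measure_mono_null (dcell_subset i m k r hr) h0
    have A : ∑ r ∈ Finset.range (2 ^ m),
        ent ((c⁻¹ * μ (dcell (i + m) (k * 2 ^ m + r))).toReal) = 0 := by
      apply Finset.sum_eq_zero
      intro r hr
      rw [hsub r hr]
      simp [ent_zero]
    have B : ∑ r ∈ Finset.range (2 ^ m),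
        ent ((μ (dcell (i + m) (k * 2 ^ m + r))).toReal) = 0 := by
      apply Finset.sum_eq_zero
      intro r hr
      rw [hsub r hr]
      simp [ent_zero]
    rw [A, B, h0]
    simp [ent_zero]
  · have hp : 0 < c.toReal := ENNReal.toReal_pos h0 hct
    have hterm : ∀ r ∈ Finset.range (2 ^ m),
        c.toReal * ent (((c)⁻¹ * μ (dcell (i + m) (k * 2 ^ m + r))).toReal)
          = ent ((μ (dcell (i + m) (k * 2 ^ m + r))).toReal)
            + (μ (dcell (i + m) (k * 2 ^ m + r))).toReal * Real.logb 2 c.toReal := by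
      intro r hr
      set q := (μ (dcell (i + m) (k * 2 ^ m + r))).toReal with hq
      have hqt : μ (dcell (i + m) (k * 2 ^ m + r)) ≠ ⊤ := measure_ne_top μ _
      have htr : ((c)⁻¹ * μ (dcell (i + m) (k * 2 ^ m + r))).toReal = q / c.toReal := by
        rw [ENNReal.toReal_mul, ENNReal.toReal_inv]
        rw [div_eq_inv_mul]
      rw [htr]
      by_cases hq0 : q = 0
      · simp [hq0, ent_zero]
      · have hqpos : 0 < q := lt_of_le_of_ne ENNReal.toReal_nonneg (Ne.symm hq0)
        rw [ent, ent, Real.logb_div hq0 (ne_of_gt hp)]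
        field_simp
        ring
    rw [Finset.mul_sum, Finset.sum_congr rfl hterm, Finset.sum_add_distrib,
        ← Finset.sum_mul]
    have hsum : ∑ r ∈ Finset.range (2 ^ m), (μ (dcell (i + m) (k * 2 ^ m + r))).toReal
        = c.toReal := by
      rw [hc, measure_dcell_sum μ i m k, ENNReal.toReal_sum]
      intro r _
      exact measure_ne_top μ _
    rw [hsum, ent]
    ring

lemma sum_range_mul_pow {M : Type*} [AddCommMonoid M] (f : ℕ → M) (a b : ℕ) :
    ∑ l ∈ Finset.range (a * b), f l
      = ∑ k ∈ Finset.range a, ∑ r ∈ Finset.range b, f (k * b + r) := by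
  induction a with
  | zero => simp
  | succ a ih =>
      rw [Finset.sum_range_succ, ← ih, Nat.succ_mul, Finset.sum_range_add]

lemma ent_le_aux {t : ℝ} (ht : 0 ≤ t) (N : ℕ) (hN : 0 < N) :
    ent t ≤ t * Real.logb 2 N + (1 / N - t) / Real.log 2 := by
  have hl2 : (0 : ℝ) < Real.log 2 := Real.log_pos one_lt_two
  have hNpos : (0 : ℝ) < N := by exact_mod_cast hN
  rcases eq_or_lt_of_le ht with h | h
  · rw [← h, ent_zero, zero_mul, sub_zero, zero_add]
    positivity
  · have hx : (0 : ℝ) < 1 / (t * N) := by positivity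
    have hlog := Real.log_le_sub_one_of_pos hx
    rw [Real.log_div one_ne_zero (by positivity), Real.log_one,
      Real.log_mul (ne_of_gt h) (ne_of_gt hNpos)] at hlog
    have key : -(t * Real.log t) ≤ t * Real.log N + (1 / N - t) := by
      have h2 : t * (1 / (t * N)) = 1 / N := by field_simp
      nlinarith [hlog, h.le]
    have hL : (0 : ℝ) ≤ (Real.log 2)⁻¹ := inv_nonneg.mpr hl2.le
    have hkey := mul_le_mul_of_nonneg_right key hL
    rw [ent]
    have lhs_eq : -(t * Real.logb 2 t) = -(t * Real.log t) * (Real.log 2)⁻¹ := by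
      rw [Real.logb]; ring
    have rhs_eq : t * Real.logb 2 (N : ℝ) + (1 / (N : ℝ) - t) / Real.log 2
        = (t * Real.log (N : ℝ) + (1 / (N : ℝ) - t)) * (Real.log 2)⁻¹ := by
      rw [Real.logb]; ring
    rw [lhs_eq, rhs_eq]
    exact hkey

lemma sum_ent_le {N : ℕ} (hN : 0 < N) {a : ℕ → ℝ} (h0 : ∀ r ∈ Finset.range N, 0 ≤ a r)
    (h1 : ∑ r ∈ Finset.range N, a r = 1) :
    ∑ r ∈ Finset.range N, ent (a r) ≤ Real.logb 2 N := by
  have hl2 : (0 : ℝ) < Real.log 2 := Real.log_pos one_lt_two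
  have hNpos : (0 : ℝ) < N := by exact_mod_cast hN
  calc ∑ r ∈ Finset.range N, ent (a r)
      ≤ ∑ r ∈ Finset.range N, (a r * Real.logb 2 N + (1 / N - a r) / Real.log 2) :=
        Finset.sum_le_sum (fun r hr => ent_le_aux (h0 r hr) N hN)
    _ = Real.logb 2 N := by
        have : ∑ r ∈ Finset.range N, ((1 : ℝ) / N - a r) = 0 := by
          rw [Finset.sum_sub_distrib, h1, Finset.sum_const, Finset.card_range, nsmul_eq_mul]
          field_simp; ring
        rw [Finset.sum_add_distrib, ← Finset.sum_mul, h1, ← Finset.sum_div, this]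
        simp

lemma enn_inv_mul_le_one {a b : ENNReal} (h : b ≤ a) : a⁻¹ * b ≤ 1 := by
  rcases eq_or_ne a ⊤ with rfl | hat
  · simp
  rcases eq_or_ne a 0 with rfl | ha0
  · have : b = 0 := le_antisymm h zero_le
    simp [this]
  · calc a⁻¹ * b ≤ a⁻¹ * a := mul_le_mul_right h _
      _ = 1 := ENNReal.inv_mul_cancel ha0 hat

lemma toReal_inv_mul_le_one {a b : ENNReal} (h : b ≤ a) : (a⁻¹ * b).toReal ≤ 1 := by
  have := ENNReal.toReal_mono ENNReal.one_ne_top (enn_inv_mul_le_one h)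
  simpa using this

noncomputable def Gfun (μ : Measure ℝ) (i m k : ℕ) : ℝ :=
  ∑ r ∈ Finset.range (2 ^ m),
    ent (((μ (dcell i k))⁻¹ * μ (dcell (i + m) (k * 2 ^ m + r))).toReal)

lemma Gfun_nonneg (μ : Measure ℝ) (i m k : ℕ) : 0 ≤ Gfun μ i m k := by
  apply Finset.sum_nonneg
  intro r hr
  rw [Finset.mem_range] at hr
  exact ent_nonneg ENNReal.toReal_nonneg
    (toReal_inv_mul_le_one (measure_mono (dcell_subset i m k r hr)))

lemma logb_two_pow (m : ℕ) : Real.logb 2 ((2 : ℝ) ^ m) = m := by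
  rw [Real.logb_pow, Real.logb_self_eq_one (by norm_num)]
  ring

lemma Psum_one (μ : Measure ℝ) [IsProbabilityMeasure μ] (hμ : μ (Set.Ico 0 1) = 1) (j : ℕ) :
    ∑ k ∈ Finset.range (2 ^ j), (μ (dcell j k)).toReal = 1 := by
  have h := measure_dcell_sum μ 0 j 0
  have h0 : dcell 0 0 = Set.Ico (0 : ℝ) 1 := by
    simp [dcell]
  rw [h0, hμ] at h
  have := congrArg ENNReal.toReal h
  rw [ENNReal.toReal_sum (fun r _ => measure_ne_top μ _)] at this
  simpa using this.symm

lemma Hdy_nonneg (μ : Measure ℝ) [IsProbabilityMeasure μ] (j : ℕ) : 0 ≤ Hdy μ j := by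
  apply Finset.sum_nonneg
  intro k _
  apply ent_nonneg ENNReal.toReal_nonneg
  have : μ (dcell j k) ≤ 1 := prob_le_one
  have := ENNReal.toReal_mono ENNReal.one_ne_top this
  simpa using this

lemma Hdy_le (μ : Measure ℝ) [IsProbabilityMeasure μ] (hμ : μ (Set.Ico 0 1) = 1) (j : ℕ) :
    Hdy μ j ≤ j := by
  have := sum_ent_le (N := 2 ^ j) (a := fun k => (μ (dcell j k)).toReal)
    (Nat.pow_pos (by norm_num))
    (fun r _ => ENNReal.toReal_nonneg) (Psum_one μ hμ j)
  rw [Hdy]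
  calc ∑ k ∈ Finset.range (2 ^ j), ent ((μ (dcell j k)).toReal)
      ≤ Real.logb 2 ((2 : ℕ) ^ j : ℕ) := this
    _ = j := by push_cast; exact logb_two_pow j

lemma sum_PG_eq (μ : Measure ℝ) [IsProbabilityMeasure μ] (i m : ℕ) :
    ∑ k ∈ Finset.range (2 ^ i), (μ (dcell i k)).toReal * Gfun μ i m k
      = Hdy μ (i + m) - Hdy μ i := by
  have h : ∀ k ∈ Finset.range (2 ^ i),
      (μ (dcell i k)).toReal * Gfun μ i m k
        = (∑ r ∈ Finset.range (2 ^ m), ent ((μ (dcell (i + m) (k * 2 ^ m + r))).toReal))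
          - ent ((μ (dcell i k)).toReal) :=
    fun k _ => per_cell_chain μ i m k
  rw [Finset.sum_congr rfl h, Finset.sum_sub_distrib]
  have : ∑ k ∈ Finset.range (2 ^ i), ∑ r ∈ Finset.range (2 ^ m),
      ent ((μ (dcell (i + m) (k * 2 ^ m + r))).toReal) = Hdy μ (i + m) := by
    rw [Hdy, pow_add, sum_range_mul_pow]
  rw [this]
  rfl

lemma gap_nonneg (μ : Measure ℝ) [IsProbabilityMeasure μ] (i m : ℕ) :
    0 ≤ Hdy μ (i + m) - Hdy μ i := by
  rw [← sum_PG_eq μ i m]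
  apply Finset.sum_nonneg
  intro k _
  exact mul_nonneg ENNReal.toReal_nonneg (Gfun_nonneg μ i m k)

lemma gap_le (μ : Measure ℝ) [IsProbabilityMeasure μ] (hμ : μ (Set.Ico 0 1) = 1) (i m : ℕ) :
    Hdy μ (i + m) - Hdy μ i ≤ m := by
  rw [← sum_PG_eq μ i m]
  have hbound : ∀ k ∈ Finset.range (2 ^ i),
      (μ (dcell i k)).toReal * Gfun μ i m k ≤ (μ (dcell i k)).toReal * m := by
    intro k _
    set c := μ (dcell i k) with hc
    rcases eq_or_ne c 0 with h0 | h0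
    · have : c.toReal = 0 := by rw [h0]; simp
      rw [this]; simp
    · apply mul_le_mul_of_nonneg_left ?_ ENNReal.toReal_nonneg
      have hct : c ≠ ⊤ := measure_ne_top μ _
      have hp : 0 < c.toReal := ENNReal.toReal_pos h0 hct
      have hsum1 : ∑ r ∈ Finset.range (2 ^ m),
          ((c⁻¹ * μ (dcell (i + m) (k * 2 ^ m + r))).toReal) = 1 := by
        have : ∀ r, (c⁻¹ * μ (dcell (i + m) (k * 2 ^ m + r))).toReal
            = (μ (dcell (i + m) (k * 2 ^ m + r))).toReal / c.toReal := by
          intro r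
          rw [ENNReal.toReal_mul, ENNReal.toReal_inv, div_eq_inv_mul]
        simp only [this]
        rw [← Finset.sum_div]
        have hsum : ∑ r ∈ Finset.range (2 ^ m), (μ (dcell (i + m) (k * 2 ^ m + r))).toReal
            = c.toReal := by
          rw [hc, measure_dcell_sum μ i m k, ENNReal.toReal_sum (fun r _ => measure_ne_top μ _)]
        rw [hsum, div_self (ne_of_gt hp)]
      have := sum_ent_le (N := 2 ^ m)
        (a := fun r => ((c⁻¹ * μ (dcell (i + m) (k * 2 ^ m + r))).toReal))
        (Nat.pow_pos (by norm_num)) (fun r _ => ENNReal.toReal_nonneg) hsum1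
      calc Gfun μ i m k ≤ Real.logb 2 ((2 : ℕ) ^ m : ℕ) := this
        _ = m := by push_cast; exact logb_two_pow m
  calc ∑ k ∈ Finset.range (2 ^ i), (μ (dcell i k)).toReal * Gfun μ i m k
      ≤ ∑ k ∈ Finset.range (2 ^ i), (μ (dcell i k)).toReal * m :=
        Finset.sum_le_sum hbound
    _ = m := by rw [← Finset.sum_mul, Psum_one μ hμ i, one_mul]

lemma mem_dcell_of_mem_Ico {x : ℝ} (hx : x ∈ Set.Ico (0 : ℝ) 1) (i : ℕ) :
    ⌊x * 2 ^ i⌋.toNat < 2 ^ i ∧ x ∈ dcell i (⌊x * 2 ^ i⌋.toNat) := by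
  obtain ⟨hx0, hx1⟩ := hx
  have hpos : (0 : ℝ) < 2 ^ i := by positivity
  have h0 : (0 : ℝ) ≤ x * 2 ^ i := by positivity
  have h1 : x * 2 ^ i < 2 ^ i := by
    calc x * 2 ^ i < 1 * 2 ^ i := mul_lt_mul_of_pos_right hx1 hpos
      _ = 2 ^ i := one_mul _
  have hfl0 : 0 ≤ ⌊x * 2 ^ i⌋ := Int.floor_nonneg.mpr h0
  have hflub : ⌊x * 2 ^ i⌋ < (2 : ℤ) ^ i := by
    have : (⌊x * 2 ^ i⌋ : ℝ) < 2 ^ i := lt_of_le_of_lt (Int.floor_le _) h1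
    exact_mod_cast this
  constructor
  · have hcast2 : ((2 ^ i : ℕ) : ℤ) = (2 : ℤ) ^ i := by push_cast; ring
    omega
  · have hcast : ((⌊x * 2 ^ i⌋.toNat : ℕ) : ℝ) = (⌊x * 2 ^ i⌋ : ℝ) := by
      exact_mod_cast Int.toNat_of_nonneg hfl0
    rw [dcell, Set.mem_Ico, hcast]
    constructor
    · rw [div_le_iff₀ hpos]
      exact Int.floor_le _
    · rw [lt_div_iff₀ hpos]
      exact Int.lt_floor_add_one _

lemma integral_Hdy_comp (μ : Measure ℝ) [IsProbabilityMeasure μ]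
    (hμ : μ (Set.Ico 0 1) = 1) (i m : ℕ) :
    ∫ x, Hdy (comp μ i x) (i + m) ∂μ = Hdy μ (i + m) - Hdy μ i := by
  set s : ℝ → ℝ := fun x =>
    ∑ k ∈ Finset.range (2 ^ i), (dcell i k).indicator (fun _ => Gfun μ i m k) x with hs
  have hae : (fun x => Hdy (comp μ i x) (i + m)) =ᵐ[μ] s := by
    have hnull : μ (Set.Ico (0 : ℝ) 1)ᶜ = 0 := by
      rw [measure_compl measurableSet_Ico (measure_ne_top μ _), hμ, measure_univ]
      simp
    have hmem : Set.Ico (0 : ℝ) 1 ∈ MeasureTheory.ae μ := by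
      rw [mem_ae_iff]
      exact hnull
    apply Filter.eventually_of_mem hmem
    intro x hx
    obtain ⟨hk, hxk⟩ := mem_dcell_of_mem_Ico hx i
    set k := ⌊x * 2 ^ i⌋.toNat
    have h1 : Hdy (comp μ i x) (i + m) = Gfun μ i m k := Hdy_comp_eq μ m hk hxk
    have h2 : s x = Gfun μ i m k := by
      show (∑ k ∈ Finset.range (2 ^ i), (dcell i k).indicator (fun _ => Gfun μ i m k) x)
        = Gfun μ i m k
      rw [Finset.sum_eq_single k]
      · rw [Set.indicator_of_mem hxk]
      · intro j hj hjk
        apply Set.indicator_of_notMem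
        intro hxj
        exact (Set.disjoint_left.mp (dcell_disjoint hjk) hxj) hxk
      · intro hk'
        exact absurd (Finset.mem_range.mpr hk) hk'
    show Hdy (comp μ i x) (i + m) = s x
    rw [h1, h2]
  rw [integral_congr_ae hae, hs]
  rw [integral_finset_sum]
  · have : ∀ k ∈ Finset.range (2 ^ i),
        ∫ x, (dcell i k).indicator (fun _ => Gfun μ i m k) x ∂μ
          = (μ (dcell i k)).toReal * Gfun μ i m k := by
      intro k _
      rw [integral_indicator_const _ (measurableSet_dcell i k)]
      simp [smul_eq_mul, Measure.real]
    rw [Finset.sum_congr rfl this, sum_PG_eq μ i m]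
  · intro k _
    rw [integrable_indicator_iff (measurableSet_dcell i k)]
    apply (integrableOn_const_iff (C := Gfun μ i m k)).mpr
    right
    exact measure_lt_top μ _

lemma telescope_sum (v : ℕ → ℝ) (n m : ℕ) :
    ∑ i ∈ Finset.range n, (v (i + m) - v i)
      = ∑ i ∈ Finset.range m, v (n + i) - ∑ i ∈ Finset.range m, v i := by
  have h1 : ∑ i ∈ Finset.range (m + n), v i
      = ∑ i ∈ Finset.range m, v i + ∑ i ∈ Finset.range n, v (m + i) :=
    Finset.sum_range_add v m n
  have h2 : ∑ i ∈ Finset.range (n + m), v i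
      = ∑ i ∈ Finset.range n, v i + ∑ i ∈ Finset.range m, v (n + i) :=
    Finset.sum_range_add v n m
  have h3 : ∑ i ∈ Finset.range (m + n), v i = ∑ i ∈ Finset.range (n + m), v i := by
    rw [Nat.add_comm]
  have h4 : ∑ i ∈ Finset.range n, (v (i + m) - v i)
      = ∑ i ∈ Finset.range n, v (m + i) - ∑ i ∈ Finset.range n, v i := by
    rw [Finset.sum_sub_distrib]
    congr 1
    exact Finset.sum_congr rfl (fun i _ => by rw [Nat.add_comm])
  rw [h4]
  linarith

theorem multiscale_entropy_formula' :
    ∃ C > (0 : ℝ), ∀ (μ : Measure ℝ), IsProbabilityMeasure μ → μ (Set.Ico 0 1) = 1 →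
      ∀ m n : ℕ, 1 ≤ m → 1 ≤ n →
      |(1 / n : ℝ) * Hdy μ n -
          (1 / n : ℝ) * ∑ i ∈ Finset.Icc 1 n, ∫ x, (1 / m : ℝ) * Hdy (comp μ i x) (i + m) ∂μ|
        ≤ C * m / n := by
  refine ⟨1, one_pos, ?_⟩
  intro μ hprob hμ m n hm hn
  have hm' : (0 : ℝ) < m := by exact_mod_cast hm
  have hn' : (0 : ℝ) < n := by exact_mod_cast hn
  set u : ℕ → ℝ := fun j => Hdy μ j with hu
  set v : ℕ → ℝ := fun j => u (j + 1) with hv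
  -- compute each integral
  have hint : ∀ i : ℕ, ∫ x, (1 / m : ℝ) * Hdy (comp μ i x) (i + m) ∂μ
      = (1 / m : ℝ) * (u (i + m) - u i) := by
    intro i
    rw [integral_const_mul, integral_Hdy_comp μ hμ i m]
  have hsum : ∑ i ∈ Finset.Icc 1 n, ∫ x, (1 / m : ℝ) * Hdy (comp μ i x) (i + m) ∂μ
      = (1 / m : ℝ) * ∑ i ∈ Finset.range n, (v (i + m) - v i) := by
    rw [Finset.sum_congr rfl (fun i _ => hint i), ← Finset.mul_sum]
    congr 1
    rw [← Finset.Ico_add_one_right_eq_Icc, Finset.sum_Ico_eq_sum_range]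
    -- index cleanup
    apply Finset.sum_congr rfl
    intro i _
    have e1 : 1 + i + m = i + m + 1 := by omega
    have e2 : 1 + i = i + 1 := by omega
    rw [e1, e2]
  set T := ∑ i ∈ Finset.range n, (v (i + m) - v i) with hT
  have hTel : T = ∑ i ∈ Finset.range m, (v (n + i) - v i) := by
    rw [hT, telescope_sum, Finset.sum_sub_distrib]
  -- bounds on each telescope term
  have hupper : ∀ i ∈ Finset.range m, v (n + i) - v i ≤ u n + m := by
    intro i hi
    rw [Finset.mem_range] at hi
    have h1 : u (n + (i + 1)) - u n ≤ (i + 1 : ℕ) := gap_le μ hμ n (i + 1)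
    have h2 : ((i + 1 : ℕ) : ℝ) ≤ m := by exact_mod_cast hi
    have h3 : 0 ≤ v i := Hdy_nonneg μ (i + 1)
    have e : n + i + 1 = n + (i + 1) := by omega
    have : v (n + i) = u (n + (i + 1)) := by rw [hv]; simp only [e]
    rw [this]
    linarith
  have hlower : ∀ i ∈ Finset.range m, u n - m ≤ v (n + i) - v i := by
    intro i hi
    rw [Finset.mem_range] at hi
    have h1 : 0 ≤ u (n + (i + 1)) - u n := gap_nonneg μ n (i + 1)
    have h2 : v i ≤ ((i + 1 : ℕ) : ℝ) := Hdy_le μ hμ (i + 1)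
    have h2' : ((i + 1 : ℕ) : ℝ) ≤ m := by exact_mod_cast hi
    have e : n + i + 1 = n + (i + 1) := by omega
    have : v (n + i) = u (n + (i + 1)) := by rw [hv]; simp only [e]
    rw [this]
    linarith
  have hTub : T ≤ (m : ℝ) * (u n + m) := by
    rw [hTel]
    calc ∑ i ∈ Finset.range m, (v (n + i) - v i)
        ≤ ∑ i ∈ Finset.range m, (u n + (m : ℝ)) := Finset.sum_le_sum hupper
      _ = (m : ℝ) * (u n + m) := by
          rw [Finset.sum_const, Finset.card_range, nsmul_eq_mul]
  have hTlb : (m : ℝ) * (u n - m) ≤ T := by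
    rw [hTel]
    calc (m : ℝ) * (u n - m)
        = ∑ i ∈ Finset.range m, (u n - (m : ℝ)) := by
          rw [Finset.sum_const, Finset.card_range, nsmul_eq_mul]
      _ ≤ ∑ i ∈ Finset.range m, (v (n + i) - v i) := Finset.sum_le_sum hlower
  have habs : |u n - (1 / m : ℝ) * T| ≤ m := by
    rw [abs_le]
    constructor
    · have : (1 / m : ℝ) * T ≤ u n + m := by
        rw [div_mul_eq_mul_div, mul_comm, ← div_mul_eq_mul_div, mul_one]
        rw [div_le_iff₀ hm']
        calc T ≤ (m : ℝ) * (u n + m) := hTub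
          _ = (u n + m) * m := by ring
      linarith
    · have : u n - m ≤ (1 / m : ℝ) * T := by
        rw [div_mul_eq_mul_div, mul_comm, ← div_mul_eq_mul_div, mul_one]
        rw [le_div_iff₀ hm']
        calc (u n - m) * m = (m : ℝ) * (u n - m) := by ring
          _ ≤ T := hTlb
      linarith
  rw [hsum]
  have : (1 / n : ℝ) * u n - (1 / n : ℝ) * ((1 / m : ℝ) * T)
      = (1 / n : ℝ) * (u n - (1 / m : ℝ) * T) := by ring
  rw [this, abs_mul, abs_of_pos (by positivity : (0:ℝ) < 1 / n)]
  calc (1 / n : ℝ) * |u n - (1 / m : ℝ) * T| ≤ (1 / n : ℝ) * m := by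
        apply mul_le_mul_of_nonneg_left habs (by positivity)
    _ = 1 * m / n := by ring

/-- For a probability measure `η` on `[0,1)` and all `m, n ≥ 1`:
`(1/n) H(η, D_n) = E_{1≤i≤n}[(1/m) H(η_{x,i}, D_{i+m})] + O(m/n)`
with an absolute implied constant. -/
theorem multiscale_entropy_formula :
    ∃ C > (0 : ℝ), ∀ (μ : Measure ℝ), IsProbabilityMeasure μ → μ (Set.Ico 0 1) = 1 →
      ∀ m n : ℕ, 1 ≤ m → 1 ≤ n →
      |(1 / n : ℝ) * Hdy μ n -
          (1 / n : ℝ) * ∑ i ∈ Finset.Icc 1 n, ∫ x, (1 / m : ℝ) * Hdy (comp μ i x) (i + m) ∂μ|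
        ≤ C * m / n := by
  exact multiscale_entropy_formula'
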